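/- Let F be a finite field, V = ⊕_{i∈ℕ} F the F-vector space of finitely supported sequences, and G the group of all F-linear automorphisms of V, equipped with the topology induced by the embedding g ↦ (g, g⁻¹) into (V → V) × (V → V), where V carries the discrete topology and V → V the product topology of pointwise convergence. Let S_∞ ⊆ G be the subgroup of automorphisms that permute the standard basis vectors according to finitely supported permutations of ℕ. Let π be a group homomorphism from G to the group of unitary operators on a complex Hilbert space H such that for every ξ ∈ H the map g ↦ π(g)ξ is continuous. If ξ ∈ H satisfies π(σ)ξ = ξ for all σ ∈ S_∞, then π(g)ξ = ξ for all g ∈ G. -/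

import Mathlib

set_option maxHeartbeats 1000000

/-- The topology on the group of linear automorphisms of `V = ⊕_{i∈ℕ} F` induced by the
embedding `g ↦ (g, g⁻¹)` into `(V → V) × (V → V)`, where `V` carries the discrete
topology and `V → V` the product topology of pointwise convergence. -/
noncomputable def autTopology (F : Type*) [Field F] :
    TopologicalSpace ((ℕ →₀ F) ≃ₗ[F] (ℕ →₀ F)) :=
  letI : TopologicalSpace (ℕ →₀ F) := ⊥
  TopologicalSpace.induced
    (fun g => (((fun v => g v), (fun v => g.symm v)) :
      ((ℕ →₀ F) → (ℕ →₀ F)) × ((ℕ →₀ F) → (ℕ →₀ F))))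
    inferInstance

section Aux

variable {F : Type*} [Field F]

theorem aux_mul_apply (a b : (ℕ →₀ F) ≃ₗ[F] (ℕ →₀ F)) (v : ℕ →₀ F) :
    (a * b) v = a (b v) := rfl

theorem fix_of_single_fix (T : (ℕ →₀ F) →ₗ[F] (ℕ →₀ F)) (v : ℕ →₀ F)
    (hT : ∀ i ∈ v.support, T (Finsupp.single i (v i)) = Finsupp.single i (v i)) :
    T v = v := by
  conv_lhs => rw [← Finsupp.sum_single v]
  rw [map_finsuppSum, Finsupp.sum_congr (g2 := Finsupp.single) hT]
  exact Finsupp.sum_single v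

theorem extend_to_auto {K W : Type*} [Field K] [AddCommGroup W] [Module K W]
    [FiniteDimensional K W] (A : Submodule K W) (f : A →ₗ[K] W)
    (hf : Function.Injective f) :
    ∃ φ : W ≃ₗ[K] W, ∀ a : A, φ a = f a := by
  obtain ⟨A', hA⟩ := A.exists_isCompl
  obtain ⟨B', hB⟩ := (LinearMap.range f).exists_isCompl
  have hr : Module.finrank K A' = Module.finrank K B' := by
    have h1 := Submodule.finrank_add_eq_of_isCompl hA
    have h2 := Submodule.finrank_add_eq_of_isCompl hB
    have h3 : Module.finrank K A = Module.finrank K (LinearMap.range f) :=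
      (LinearEquiv.ofInjective f hf).finrank_eq
    omega
  have e' : A' ≃ₗ[K] B' := LinearEquiv.ofFinrankEq _ _ hr
  refine ⟨(Submodule.prodEquivOfIsCompl A A' hA).symm.trans
    (((LinearEquiv.ofInjective f hf).prodCongr e').trans
      (Submodule.prodEquivOfIsCompl _ B' hB)), fun a => ?_⟩
  have h0 : (Submodule.prodEquivOfIsCompl A A' hA).symm a = (a, 0) :=
    Submodule.prodEquivOfIsCompl_symm_apply_left _ _ hA a
  rw [LinearEquiv.trans_apply, h0, LinearEquiv.trans_apply, LinearEquiv.prodCongr_apply]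
  rw [Submodule.coe_prodEquivOfIsCompl']
  simp [LinearEquiv.ofInjective_apply]

theorem exists_block_approx (g : (ℕ →₀ F) ≃ₗ[F] (ℕ →₀ F)) (n : ℕ) :
    ∃ h : (ℕ →₀ F) ≃ₗ[F] (ℕ →₀ F),
      (∃ m : ℕ, ∀ i, m ≤ i → h (Finsupp.single i 1) = Finsupp.single i 1) ∧
      ∀ v ∈ Finsupp.supported F F (Set.Iio n), h v = g v := by
  classical
  set m : ℕ := max n ((Finset.range n).sup fun i =>
    (g (Finsupp.single i 1)).support.sup (· + 1)) with hm
  have hnm : n ≤ m := le_max_left _ _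
  have hmap : ∀ v ∈ Finsupp.supported F F (Set.Iio n),
      g v ∈ Finsupp.supported F F (Set.Iio m) := by
    have hle : Submodule.map (g : (ℕ →₀ F) →ₗ[F] (ℕ →₀ F))
        (Finsupp.supported F F (Set.Iio n)) ≤ Finsupp.supported F F (Set.Iio m) := by
      rw [Finsupp.supported_eq_span_single, Submodule.map_span, Submodule.span_le]
      rintro _ ⟨_, ⟨i, hi, rfl⟩, rfl⟩
      rw [SetLike.mem_coe, Finsupp.mem_supported]
      intro a ha
      have h1 : a + 1 ≤ (g (Finsupp.single i 1)).support.sup (· + 1) :=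
        Finset.le_sup (f := (· + 1)) ha
      have h2 : (g (Finsupp.single i 1)).support.sup (· + 1) ≤
          (Finset.range n).sup fun i => (g (Finsupp.single i 1)).support.sup (· + 1) :=
        Finset.le_sup (f := fun i => (g (Finsupp.single i 1)).support.sup (· + 1)) (Finset.mem_range.2 (Set.mem_Iio.mp hi))
      have h3 : a + 1 ≤ m := le_trans (le_trans h1 h2) (le_max_right _ _)
      exact Set.mem_Iio.mpr (by omega)
    intro v hv
    exact hle (Submodule.mem_map_of_mem hv)
  haveI : FiniteDimensional F ↥(Finsupp.supported F F (Set.Iio m)) :=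
    (Finsupp.supportedEquivFinsupp (M := F) (R := F) (Set.Iio m)).symm.finiteDimensional
  have hcompl : IsCompl (Finsupp.supported F F (Set.Iio m))
      (Finsupp.supported F F (Set.Ici m)) := by
    constructor
    · exact Finsupp.disjoint_supported_supported (Set.Iio_disjoint_Ici le_rfl)
    · rw [codisjoint_iff, ← Finsupp.supported_union, Set.Iio_union_Ici,
        Finsupp.supported_univ]
  set A : Submodule F ↥(Finsupp.supported F F (Set.Iio m)) :=
    (Finsupp.supported F F (Set.Iio n)).comap
      (Finsupp.supported F F (Set.Iio m)).subtype with hAdef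
  set f : A →ₗ[F] ↥(Finsupp.supported F F (Set.Iio m)) :=
    LinearMap.codRestrict _
      (((g : (ℕ →₀ F) →ₗ[F] (ℕ →₀ F)).comp
        (Finsupp.supported F F (Set.Iio m)).subtype).comp A.subtype)
      (fun a => hmap _ a.2) with hfdef
  have hfinj : Function.Injective f := by
    intro a b hab
    have h1 : g ((a : ↥(Finsupp.supported F F (Set.Iio m))) : ℕ →₀ F)
        = g ((b : ↥(Finsupp.supported F F (Set.Iio m))) : ℕ →₀ F) :=
      congrArg Subtype.val hab
    exact Subtype.ext (Subtype.ext (g.injective h1))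
  obtain ⟨φ, hφ⟩ := extend_to_auto (K := F) (W := ↥(Finsupp.supported F F (Set.Iio m))) (A := A) (f := f) (by exact hfinj)
  set E := Submodule.prodEquivOfIsCompl _ _ hcompl with hE
  set h : (ℕ →₀ F) ≃ₗ[F] (ℕ →₀ F) :=
    E.symm.trans ((φ.prodCongr (LinearEquiv.refl F _)).trans E) with hhdef
  have key : ∀ (x : ↥(Finsupp.supported F F (Set.Iio m)))
      (y : ↥(Finsupp.supported F F (Set.Ici m))),
      h ((x : ℕ →₀ F) + (y : ℕ →₀ F)) = ((φ x : ℕ →₀ F)) + (y : ℕ →₀ F) := by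
    intro x y
    have h1 : ((x : ℕ →₀ F) + (y : ℕ →₀ F)) = E (x, y) :=
      (Submodule.coe_prodEquivOfIsCompl' _ _ hcompl (x, y)).symm
    rw [hhdef, h1, LinearEquiv.trans_apply, LinearEquiv.symm_apply_apply,
      LinearEquiv.trans_apply, LinearEquiv.prodCongr_apply]
    exact Submodule.coe_prodEquivOfIsCompl' _ _ hcompl _
  refine ⟨h, ⟨m, fun i hi => ?_⟩, fun v hv => ?_⟩
  · have hy : Finsupp.single i (1 : F) ∈ Finsupp.supported F F (Set.Ici m) := by
      rw [Finsupp.mem_supported]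
      intro a ha
      have := Finsupp.support_single_subset ha
      rw [Finset.mem_singleton] at this
      exact Set.mem_Ici.mpr (this ▸ hi)
    simpa using key 0 ⟨_, hy⟩
  · have hvm : v ∈ Finsupp.supported F F (Set.Iio m) :=
      Finsupp.supported_mono (Set.Iio_subset_Iio hnm) hv
    have ha : (⟨v, hvm⟩ : ↥(Finsupp.supported F F (Set.Iio m))) ∈ A := hv
    have h3 : ((φ ⟨v, hvm⟩ : ↥(Finsupp.supported F F (Set.Iio m))) : ℕ →₀ F) = g v := by
      rw [hφ ⟨⟨v, hvm⟩, ha⟩]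
      rfl
    simpa [h3] using key ⟨v, hvm⟩ 0

theorem tendsto_autTopology {ι : Type*} {l : Filter ι}
    {g : ι → ((ℕ →₀ F) ≃ₗ[F] (ℕ →₀ F))} {g₀ : (ℕ →₀ F) ≃ₗ[F] (ℕ →₀ F)}
    (h1 : ∀ v, ∀ᶠ j in l, g j v = g₀ v)
    (h2 : ∀ v, ∀ᶠ j in l, (g j).symm v = g₀.symm v) :
    Filter.Tendsto g l (@nhds _ (autTopology F) g₀) := by
  letI : TopologicalSpace (ℕ →₀ F) := ⊥
  haveI : DiscreteTopology (ℕ →₀ F) := ⟨rfl⟩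
  rw [show autTopology F = TopologicalSpace.induced
      (fun (g : (ℕ →₀ F) ≃ₗ[F] (ℕ →₀ F)) =>
        (((fun v => g v), (fun v => g.symm v)) :
          ((ℕ →₀ F) → (ℕ →₀ F)) × ((ℕ →₀ F) → (ℕ →₀ F))))
      inferInstance from rfl]
  rw [nhds_induced, Filter.tendsto_comap_iff]
  have hcomp : ((fun (g : (ℕ →₀ F) ≃ₗ[F] (ℕ →₀ F)) =>
        (((fun v => g v), (fun v => g.symm v)) :
          ((ℕ →₀ F) → (ℕ →₀ F)) × ((ℕ →₀ F) → (ℕ →₀ F)))) ∘ g)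
      = fun j => ((fun v => g j v), (fun v => (g j).symm v)) := rfl
  rw [hcomp, nhds_prod_eq]
  apply Filter.Tendsto.prodMk
  · rw [tendsto_pi_nhds]
    intro v
    rw [nhds_discrete, Filter.tendsto_pure]
    exact h1 v
  · rw [tendsto_pi_nhds]
    intro v
    rw [nhds_discrete, Filter.tendsto_pure]
    exact h2 v

end Aux

open Topology in
theorem block_fixed (F : Type*) [Field F]
    (H : Type*) [NormedAddCommGroup H] [InnerProductSpace ℂ H] [CompleteSpace H]
    (π : ((ℕ →₀ F) ≃ₗ[F] (ℕ →₀ F)) →* unitary (H →L[ℂ] H))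
    (hcont : ∀ ξ : H,
      Continuous[autTopology F, inferInstance] fun g => (↑(π g) : H →L[ℂ] H) ξ)
    (ξ : H)
    (hfix : ∀ σ : Equiv.Perm ℕ, {i | σ i ≠ i}.Finite →
      (↑(π (Finsupp.domLCongr σ)) : H →L[ℂ] H) ξ = ξ)
    (h : (ℕ →₀ F) ≃ₗ[F] (ℕ →₀ F)) (m : ℕ)
    (hh : ∀ i, m ≤ i → h (Finsupp.single i 1) = Finsupp.single i 1) :
    (↑(π h) : H →L[ℂ] H) ξ = ξ := by
  classical
  have hsc : ∀ (j : ℕ) (c : F), m ≤ j → h (Finsupp.single j c) = Finsupp.single j c := by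
    intro j c hj
    have h1 : Finsupp.single j c = c • Finsupp.single j (1 : F) := by
      rw [Finsupp.smul_single', mul_one]
    rw [h1, map_smul, hh j hj]
  have exσ : ∀ k : ℕ, ∃ σ : Equiv.Perm ℕ,
      {i | σ i ≠ i}.Finite ∧ σ.symm = σ ∧
      (∀ i, i < m → σ i = i + (m + k)) ∧
      (∀ i, m ≤ i → i < m + k → σ i = i) ∧
      (∀ i, m + k ≤ i → i < m + k + m → σ i = i - (m + k)) := by
    intro k
    set f : ℕ → ℕ := fun i =>
      if i < m then i + (m + k) else if i < m + k then i
      else if i < m + k + m then i - (m + k) else i with hfdef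
    have hinv : Function.Involutive f := by
      intro i
      simp only [hfdef]
      split_ifs <;> omega
    refine ⟨hinv.toPerm f, ?_, Function.Involutive.toPerm_symm hinv, ?_, ?_, ?_⟩
    · apply Set.Finite.subset (Set.finite_Iio (m + k + m))
      intro i hi
      simp only [Set.mem_setOf_eq, Function.Involutive.coe_toPerm, hfdef] at hi
      by_contra hcon
      simp only [Set.mem_Iio, not_lt] at hcon
      apply hi
      split_ifs <;> omega

    · intro i hi
      simp only [Function.Involutive.coe_toPerm, hfdef]
      split_ifs <;> omega
    · intro i hi1 hi2
      simp only [Function.Involutive.coe_toPerm, hfdef]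
      split_ifs <;> omega
    · intro i hi1 hi2
      simp only [Function.Involutive.coe_toPerm, hfdef]
      split_ifs <;> omega
  choose σ hσfin hσsymm hσ1 hσ2 hσ3 using exσ
  set G : ℕ → ((ℕ →₀ F) ≃ₗ[F] (ℕ →₀ F)) := fun k =>
    Finsupp.domLCongr (σ k) * h * Finsupp.domLCongr (σ k).symm with hGdef
  -- G k fixes single i c for i < m + k
  have c1 : ∀ (k i : ℕ) (c : F), i < m + k →
      G k (Finsupp.single i c) = Finsupp.single i c := by
    intro k i c hik
    rw [hGdef]
    simp only [aux_mul_apply]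
    rw [Finsupp.domLCongr_single, hσsymm k]
    by_cases him : i < m
    · rw [hσ1 k i him, hsc _ c (by omega), Finsupp.domLCongr_single,
        hσ3 k _ (by omega) (by omega)]
      congr 1
      omega
    · rw [hσ2 k i (by omega) hik, hsc _ c (by omega), Finsupp.domLCongr_single,
        hσ2 k i (by omega) hik]
  have c2 : ∀ (k : ℕ) (v : ℕ →₀ F), (↑v.support : Set ℕ) ⊆ Set.Iio (m + k) →
      G k v = v := by
    intro k v hsupp
    have := fix_of_single_fix ((G k : (ℕ →₀ F) →ₗ[F] (ℕ →₀ F))) v ?_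
    · simpa using this
    · intro i hi
      simpa using c1 k i (v i) (Set.mem_Iio.mp (hsupp hi))
  -- G tends to 1
  have c3 : Filter.Tendsto G Filter.atTop (@nhds _ (autTopology F) 1) := by
    apply tendsto_autTopology
    · intro v
      rw [Filter.eventually_atTop]
      refine ⟨v.support.sup (· + 1), fun k hk => ?_⟩
      have : G k v = v := by
        apply c2
        intro a ha
        have h1 : a + 1 ≤ v.support.sup (· + 1) := Finset.le_sup (f := (· + 1)) ha
        exact Set.mem_Iio.mpr (by omega)
      simpa using this
    · intro v
      rw [Filter.eventually_atTop]
      refine ⟨v.support.sup (· + 1), fun k hk => ?_⟩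
      have h1 : G k v = v := by
        apply c2
        intro a ha
        have h1 : a + 1 ≤ v.support.sup (· + 1) := Finset.le_sup (f := (· + 1)) ha
        exact Set.mem_Iio.mpr (by omega)
      have h2 : (G k).symm v = v := by
        rw [LinearEquiv.symm_apply_eq]
        exact h1.symm
      exact h2
  -- π applied to G k
  have c4 : ∀ k, (↑(π (G k)) : H →L[ℂ] H) ξ
      = (↑(π (Finsupp.domLCongr (σ k))) : H →L[ℂ] H) ((↑(π h) : H →L[ℂ] H) ξ) := by
    intro k
    rw [hGdef]
    simp only [map_mul]
    have hfix2 : (↑(π (Finsupp.domLCongr (σ k).symm)) : H →L[ℂ] H) ξ = ξ := by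
      apply hfix
      rw [hσsymm k]
      exact hσfin k
    rw [MulMemClass.coe_mul, MulMemClass.coe_mul, ContinuousLinearMap.mul_apply,
      ContinuousLinearMap.mul_apply, hfix2]
  have c5 : ∀ k, ‖(↑(π (G k)) : H →L[ℂ] H) ξ - ξ‖
      = ‖(↑(π h) : H →L[ℂ] H) ξ - ξ‖ := by
    intro k
    have hfixT : (↑(π (Finsupp.domLCongr (σ k))) : H →L[ℂ] H) ξ = ξ :=
      hfix (σ k) (hσfin k)
    calc ‖(↑(π (G k)) : H →L[ℂ] H) ξ - ξ‖
        = ‖(↑(π (Finsupp.domLCongr (σ k))) : H →L[ℂ] H)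
            ((↑(π h) : H →L[ℂ] H) ξ - ξ)‖ := by
          rw [map_sub, c4 k, hfixT]
      _ = ‖(↑(π h) : H →L[ℂ] H) ξ - ξ‖ :=
          Unitary.norm_map (π (Finsupp.domLCongr (σ k))) _
  have c6 : Filter.Tendsto (fun k => (↑(π (G k)) : H →L[ℂ] H) ξ)
      Filter.atTop (𝓝 ξ) := by
    have h0 := (@Continuous.tendsto _ _ (autTopology F) _ _ (hcont ξ) 1).comp c3
    have h1 : (↑(π (1 : (ℕ →₀ F) ≃ₗ[F] (ℕ →₀ F))) : H →L[ℂ] H) ξ = ξ := by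
      simp only [map_one, OneMemClass.coe_one, ContinuousLinearMap.one_apply]
    simp only [Function.comp_def] at h0
    rw [h1] at h0
    exact h0
  have c7 : Filter.Tendsto (fun k => ‖(↑(π (G k)) : H →L[ℂ] H) ξ - ξ‖)
      Filter.atTop (𝓝 0) := by
    have := (c6.sub (tendsto_const_nhds (x := ξ))).norm
    simpa using this
  have c8 : Filter.Tendsto (fun _ : ℕ => ‖(↑(π h) : H →L[ℂ] H) ξ - ξ‖)
      Filter.atTop (𝓝 0) := by
    have : (fun k => ‖(↑(π (G k)) : H →L[ℂ] H) ξ - ξ‖)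
        = fun _ : ℕ => ‖(↑(π h) : H →L[ℂ] H) ξ - ξ‖ := funext c5
    rwa [this] at c7
  have c9 : ‖(↑(π h) : H →L[ℂ] H) ξ - ξ‖ = 0 :=
    tendsto_nhds_unique tendsto_const_nhds c8
  have := norm_eq_zero.mp c9
  exact sub_eq_zero.mp this

open Topology in
/-- For a continuous unitary representation `π` of the group of all
linear automorphisms of `V = ⊕_{i∈ℕ} F` (`F` a finite field), any vector fixed by all
finitely supported permutations of the standard basis is fixed by the whole group. -/
theorem fixed_by_finitary_permutations_is_fixed
    (F : Type*) [Field F] [Fintype F]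
    (H : Type*) [NormedAddCommGroup H] [InnerProductSpace ℂ H] [CompleteSpace H]
    (π : ((ℕ →₀ F) ≃ₗ[F] (ℕ →₀ F)) →* unitary (H →L[ℂ] H))
    (hcont : ∀ ξ : H,
      Continuous[autTopology F, inferInstance] fun g => (↑(π g) : H →L[ℂ] H) ξ)
    (ξ : H)
    (hfix : ∀ σ : Equiv.Perm ℕ, {i | σ i ≠ i}.Finite →
      (↑(π (Finsupp.domLCongr σ)) : H →L[ℂ] H) ξ = ξ) :
    ∀ g : (ℕ →₀ F) ≃ₗ[F] (ℕ →₀ F), (↑(π g) : H →L[ℂ] H) ξ = ξ := by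
  intro g
  have approx : ∀ k : ℕ, ∃ h : (ℕ →₀ F) ≃ₗ[F] (ℕ →₀ F),
      ((↑(π h) : H →L[ℂ] H) ξ = ξ) ∧
      ∀ v ∈ Finsupp.supported F F (Set.Iio k), h v = g v := by
    intro k
    obtain ⟨h, ⟨m, hm⟩, hagree⟩ := exists_block_approx g k
    exact ⟨h, block_fixed F H π hcont ξ hfix h m hm, hagree⟩
  choose hseq hfixseq hagree using approx
  have t1 : Filter.Tendsto hseq Filter.atTop (@nhds _ (autTopology F) g) := by
    apply tendsto_autTopology
    · intro v
      rw [Filter.eventually_atTop]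
      refine ⟨v.support.sup (· + 1), fun k hk => ?_⟩
      apply hagree
      rw [Finsupp.mem_supported]
      intro a ha
      have h1 : a + 1 ≤ v.support.sup (· + 1) := Finset.le_sup (f := (· + 1)) ha
      exact Set.mem_Iio.mpr (by omega)
    · intro v
      rw [Filter.eventually_atTop]
      refine ⟨(g.symm v).support.sup (· + 1), fun k hk => ?_⟩
      have h1 : hseq k (g.symm v) = g (g.symm v) := by
        apply hagree
        rw [Finsupp.mem_supported]
        intro a ha
        have h2 : a + 1 ≤ (g.symm v).support.sup (· + 1) := Finset.le_sup (f := (· + 1)) ha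
        exact Set.mem_Iio.mpr (by omega)
      rw [g.apply_symm_apply] at h1
      rw [LinearEquiv.symm_apply_eq]
      exact h1.symm
  have t2 : Filter.Tendsto (fun k => (↑(π (hseq k)) : H →L[ℂ] H) ξ)
      Filter.atTop (𝓝 ((↑(π g) : H →L[ℂ] H) ξ)) :=
    (@Continuous.tendsto _ _ (autTopology F) _ _ (hcont ξ) g).comp t1
  have t3 : Filter.Tendsto (fun k => (↑(π (hseq k)) : H →L[ℂ] H) ξ)
      Filter.atTop (𝓝 ξ) := by
    have : (fun k => (↑(π (hseq k)) : H →L[ℂ] H) ξ) = fun _ : ℕ => ξ := funext hfixseq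
    rw [this]
    exact tendsto_const_nhds
  exact tendsto_nhds_unique t2 t3
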